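/- arXiv:2005.04469 — 2 statements merged into one kernel-verified Lean document; each statement's English description precedes it below -/
import Mathlib

section
/- Let a, b, c, d be four points in the plane such that no two of a-b, a-c, a-d are parallel (all relevant angles are nonzero mod π). Then sin∠(abc)·sin∠(acd)·sin∠(adb) = sin∠(abd)·sin∠(acb)·sin∠(adc), where ∠(xyz) denotes the undirected angle at vertex y between rays yx and yz. -/
open Real EuclideanGeometry InnerProductGeometry

lemma vec_sines {V : Type*} [NormedAddCommGroup V] [InnerProductSpace ℝ V] (u v : V) :
    Real.sin (InnerProductGeometry.angle u v) * (‖u‖ * ‖v‖)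
      = Real.sin (InnerProductGeometry.angle (u - v) (-v)) * (‖u - v‖ * ‖-v‖) := by
  rw [sin_angle_mul_norm_mul_norm, sin_angle_mul_norm_mul_norm]
  congr 1
  simp only [inner_sub_left, inner_sub_right, inner_neg_left, inner_neg_right,
    real_inner_comm v u]
  ring

lemma law_of_sines {V P : Type*} [NormedAddCommGroup V] [InnerProductSpace ℝ V]
    [MetricSpace P] [NormedAddTorsor V P] (x y z : P) :
    Real.sin (∠ x y z) * (dist x y * dist z y)
      = Real.sin (∠ x z y) * (dist x z * dist y z) := by
  have h := vec_sines (x -ᵥ y) (z -ᵥ y)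
  rw [vsub_sub_vsub_cancel_right, neg_vsub_eq_vsub_rev,
    ← dist_eq_norm_vsub V, ← dist_eq_norm_vsub V, ← dist_eq_norm_vsub V,
    ← dist_eq_norm_vsub V] at h
  exact h

/-- For four points a, b, c, d in the plane with all relevant angles
strictly between 0 and π, the quadrilateral sine constraint
sin∠(abc)·sin∠(acd)·sin∠(adb) = sin∠(abd)·sin∠(acb)·sin∠(adc) holds. -/
theorem quadrilateral_sine_constraint (a b c d : EuclideanSpace ℝ (Fin 2))
    (h1 : ∠ a b c ∈ Set.Ioo 0 π) (h2 : ∠ a b d ∈ Set.Ioo 0 π)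
    (h3 : ∠ a c d ∈ Set.Ioo 0 π) (h4 : ∠ a c b ∈ Set.Ioo 0 π)
    (h5 : ∠ a d b ∈ Set.Ioo 0 π) (h6 : ∠ a d c ∈ Set.Ioo 0 π) :
    Real.sin (∠ a b c) * Real.sin (∠ a c d) * Real.sin (∠ a d b)
      = Real.sin (∠ a b d) * Real.sin (∠ a c b) * Real.sin (∠ a d c) := by
  by_cases hbc : b = c
  · subst hbc; ring
  by_cases hbd : b = d
  · subst hbd; ring
  by_cases hcd : c = d
  · subst hcd; ring
  have hab : a ≠ b := by
    rintro rfl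
    by_cases hac : a = c
    · exact hbc hac
    · exact absurd (EuclideanGeometry.angle_self_of_ne hac) h4.1.ne'
  have hac : a ≠ c := by
    rintro rfl
    exact absurd (EuclideanGeometry.angle_self_of_ne hab) h1.1.ne'
  have had : a ≠ d := by
    rintro rfl
    exact absurd (EuclideanGeometry.angle_self_of_ne hab) h2.1.ne'
  have E1 := law_of_sines a b c
  have E2 := law_of_sines a c d
  have E3 := law_of_sines a d b
  rw [dist_comm c b] at E1
  rw [dist_comm d c] at E2
  rw [dist_comm d b] at E3
  have hD : dist a b * dist a c * dist a d * (dist b c * dist c d * dist b d) ≠ 0 := by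
    simp [dist_eq_zero, hab, hac, had, hbc, hcd, hbd]
  apply mul_right_cancel₀ hD
  calc Real.sin (∠ a b c) * Real.sin (∠ a c d) * Real.sin (∠ a d b)
        * (dist a b * dist a c * dist a d * (dist b c * dist c d * dist b d))
      = (Real.sin (∠ a b c) * (dist a b * dist b c))
        * (Real.sin (∠ a c d) * (dist a c * dist c d))
        * (Real.sin (∠ a d b) * (dist a d * dist b d)) := by ring
    _ = (Real.sin (∠ a c b) * (dist a c * dist b c))
        * (Real.sin (∠ a d c) * (dist a d * dist c d))
        * (Real.sin (∠ a b d) * (dist a b * dist b d)) := by rw [E1, E2, E3]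
    _ = Real.sin (∠ a b d) * Real.sin (∠ a c b) * Real.sin (∠ a d c)
        * (dist a b * dist a c * dist a d * (dist b c * dist c d * dist b d)) := by ring
end

section
/- Given two distinct points p₁, p₂ in the plane and angles α, β ∈ (0, π) with α + β < π, there exist exactly two points p₃ (one on each side of line p₁p₂) such that the inner angle at p₁ in triangle p₁p₂p₃ equals α and the inner angle at p₂ equals β. -/
open Real EuclideanGeometry

noncomputable section

namespace TwoTriangleAux

open Complex

lemma angle_mul_mul {c : ℂ} (hc : c ≠ 0) (u v : ℂ) :
    InnerProductGeometry.angle (c * u) (c * v) = InnerProductGeometry.angle u v := by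
  unfold InnerProductGeometry.angle
  have hinner : (inner ℝ (c * u) (c * v) : ℝ) = Complex.normSq c * (inner ℝ u v : ℝ) := by
    rw [Complex.inner, Complex.inner]
    have : (c * v) * (starRingEnd ℂ) (c * u) =
        (Complex.normSq c : ℂ) * (v * (starRingEnd ℂ) u) := by
      rw [map_mul, Complex.normSq_eq_conj_mul_self]; ring
    rw [this, Complex.re_ofReal_mul]
  have hn : ∀ w : ℂ, ‖c * w‖ = ‖c‖ * ‖w‖ := fun w => by simp [norm_mul]
  rw [hinner, hn, hn]
  congr 1
  have h1 : Complex.normSq c = ‖c‖ ^ 2 := by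
    rw [← Complex.sq_norm]
  have hc' : ‖c‖ ≠ 0 := norm_ne_zero_iff.mpr hc
  rw [h1, show ‖c‖ * ‖u‖ * (‖c‖ * ‖v‖) = ‖c‖ ^ 2 * (‖u‖ * ‖v‖) by ring,
    mul_div_mul_left _ _ (pow_ne_zero 2 hc')]

lemma eangle_eq (a b v : ℂ) : ∠ a b v = InnerProductGeometry.angle (a - b) (v - b) := rfl

lemma angle_one (u : ℂ) :
    InnerProductGeometry.angle 1 u = Real.arccos (u.re / ‖u‖) := by
  unfold InnerProductGeometry.angle
  rw [Complex.inner]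
  simp

lemma angle_neg_one (u : ℂ) :
    InnerProductGeometry.angle (-1) u = Real.arccos (-u.re / ‖u‖) := by
  unfold InnerProductGeometry.angle
  rw [Complex.inner]
  simp [neg_div]

lemma bounds_of_abs_le {a n : ℝ} (hn : 0 < n) (h : |a| ≤ n) :
    -1 ≤ a / n ∧ a / n ≤ 1 := by
  obtain ⟨h1, h2⟩ := abs_le.mp h
  constructor
  · rw [le_div_iff₀ hn]; linarith
  · rw [div_le_one hn]; linarith

theorem key0 (α β : ℝ) (hα : α ∈ Set.Ioo 0 π) (hβ : β ∈ Set.Ioo 0 π) (hαβ : α + β < π) :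
    ∃ x y : ℂ, x ≠ y ∧
      ∠ 1 0 x = α ∧ ∠ 0 1 x = β ∧
      ∠ 1 0 y = α ∧ ∠ 0 1 y = β ∧
      ∀ z : ℂ, ∠ 1 0 z = α → ∠ 0 1 z = β → z = x ∨ z = y := by
  obtain ⟨hα0, hαπ⟩ := hα
  obtain ⟨hβ0, hβπ⟩ := hβ
  have hsa : 0 < Real.sin α := Real.sin_pos_of_pos_of_lt_pi hα0 hαπ
  have hsb : 0 < Real.sin β := Real.sin_pos_of_pos_of_lt_pi hβ0 hβπ
  set s : ℝ := Real.sin (α + β) with hs_def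
  have hs : 0 < s := Real.sin_pos_of_pos_of_lt_pi (by linarith) hαβ
  have hsadd : s = Real.sin α * Real.cos β + Real.cos α * Real.sin β := Real.sin_add α β
  set t : ℝ := Real.sin β / s with ht_def
  have ht : 0 < t := div_pos hsb hs
  have hts : t * s = Real.sin β := div_mul_cancel₀ _ hs.ne'
  have hpy : Real.sin α ^ 2 + Real.cos α ^ 2 = 1 := Real.sin_sq_add_cos_sq α
  have hpyb : Real.sin β ^ 2 + Real.cos β ^ 2 = 1 := Real.sin_sq_add_cos_sq β
  set x : ℂ := ⟨t * Real.cos α, t * Real.sin α⟩ with hx_def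
  set y : ℂ := ⟨t * Real.cos α, -(t * Real.sin α)⟩ with hy_def
  have hq : 0 < Real.sin α / s := div_pos hsa hs
  -- norms
  have hnormx : ‖x‖ = t := by
    rw [Complex.norm_def, Complex.normSq_mk,
      show t * Real.cos α * (t * Real.cos α) + t * Real.sin α * (t * Real.sin α) = t ^ 2 by
        linear_combination t ^ 2 * hpy]
    exact Real.sqrt_sq ht.le
  have hnormy : ‖y‖ = t := by
    rw [Complex.norm_def, Complex.normSq_mk,
      show t * Real.cos α * (t * Real.cos α) + -(t * Real.sin α) * -(t * Real.sin α) = t ^ 2 by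
        linear_combination t ^ 2 * hpy]
    exact Real.sqrt_sq ht.le
  -- key re identity
  have hre : t * Real.cos α - 1 = -(Real.sin α * Real.cos β) / s := by
    rw [eq_div_iff hs.ne']
    linear_combination Real.cos α * hts - hsadd
  have hnorm1 : ∀ b : ℝ, b ^ 2 = (t * Real.sin α) ^ 2 →
      ‖(⟨t * Real.cos α - 1, b⟩ : ℂ)‖ = Real.sin α / s := by
    intro b hb
    rw [Complex.norm_def, Complex.normSq_mk,
      show (t * Real.cos α - 1) * (t * Real.cos α - 1) + b * b = (Real.sin α / s) ^ 2 by
        have h1 : (t * Real.cos α - 1) ^ 2 = (Real.sin α * Real.cos β / s) ^ 2 := by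
          rw [hre]; ring
        have h2 : t * Real.sin α = Real.sin α * Real.sin β / s := by
          rw [ht_def]; ring
        have h3 : b ^ 2 = (Real.sin α * Real.sin β / s) ^ 2 := by rw [hb, h2]
        linear_combination h1 + h3 + (Real.sin α / s) ^ 2 * hpyb]
    exact Real.sqrt_sq hq.le
  have hnormx1 : ‖x - 1‖ = Real.sin α / s := by
    have hx1 : x - 1 = ⟨t * Real.cos α - 1, t * Real.sin α⟩ := by
      apply Complex.ext <;> simp [hx_def]
    rw [hx1, hnorm1 _ rfl]
  have hnormy1 : ‖y - 1‖ = Real.sin α / s := by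
    have hy1 : y - 1 = ⟨t * Real.cos α - 1, -(t * Real.sin α)⟩ := by
      apply Complex.ext <;> simp [hy_def]
    rw [hy1, hnorm1 _ (by ring)]
  -- angles of x and y
  have hangA : ∀ w : ℂ, w.re = t * Real.cos α → ‖w‖ = t → ∠ 1 0 w = α := by
    intro w hwre hwn
    rw [eangle_eq, sub_zero, sub_zero, angle_one, hwre, hwn, mul_comm,
      mul_div_assoc, div_self ht.ne', mul_one]
    exact Real.arccos_cos hα0.le hαπ.le
  have hangB : ∀ w : ℂ, w.re = t * Real.cos α → ‖w - 1‖ = Real.sin α / s →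
      ∠ 0 1 w = β := by
    intro w hwre hwn
    rw [eangle_eq, zero_sub, angle_neg_one, hwn]
    have hre' : -(w - 1).re = Real.cos β * (Real.sin α / s) := by
      have h4 : (w - 1).re = w.re - 1 := by simp
      rw [h4, hwre, hre]; ring
    rw [hre', mul_div_assoc, div_self hq.ne', mul_one]
    exact Real.arccos_cos hβ0.le hβπ.le
  have htsa : 0 < t * Real.sin α := mul_pos ht hsa
  have hxy : x ≠ y := by
    intro h
    have h5 := congrArg Complex.im h
    simp only [hx_def, hy_def] at h5
    linarith
  refine ⟨x, y, hxy, hangA x rfl hnormx, hangB x rfl hnormx1,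
    hangA y rfl hnormy, hangB y rfl hnormy1, ?_⟩
  -- uniqueness
  intro z hz1 hz2
  have hz0 : z ≠ 0 := by
    intro h
    rw [h, EuclideanGeometry.angle_self_of_ne (by norm_num : (0 : ℂ) ≠ 1)] at hz2
    linarith
  have hz1' : z ≠ 1 := by
    intro h
    rw [h, EuclideanGeometry.angle_self_of_ne (by norm_num : (1 : ℂ) ≠ 0)] at hz1
    linarith
  have hr : 0 < ‖z‖ := norm_pos_iff.mpr hz0
  have hr' : 0 < ‖z - 1‖ := norm_pos_iff.mpr (sub_ne_zero.mpr hz1')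
  -- invert arccos at p₁
  have hre_z : z.re = ‖z‖ * Real.cos α := by
    rw [eangle_eq, sub_zero, sub_zero, angle_one] at hz1
    have habs : |z.re| ≤ ‖z‖ := by
      have h6 := Complex.abs_re_le_norm z
      exact h6
    obtain ⟨hb1, hb2⟩ := bounds_of_abs_le hr habs
    have h7 := Real.cos_arccos hb1 hb2
    rw [hz1, eq_comm, div_eq_iff hr.ne'] at h7
    linear_combination h7
  have hre_z' : 1 - z.re = ‖z - 1‖ * Real.cos β := by
    rw [eangle_eq, zero_sub, angle_neg_one] at hz2
    have habs : |(-(z - 1).re)| ≤ ‖z - 1‖ := by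
      have h6 := Complex.abs_re_le_norm (z - 1)
      rwa [abs_neg]
    obtain ⟨hb1, hb2⟩ := bounds_of_abs_le hr' habs
    have h7 := Real.cos_arccos hb1 hb2
    rw [hz2, eq_comm, div_eq_iff hr'.ne'] at h7
    have h8 : (z - 1).re = z.re - 1 := by simp
    rw [h8] at h7
    linear_combination h7
  -- squared identities
  have hsq : ‖z‖ ^ 2 = z.re ^ 2 + z.im ^ 2 := by
    rw [Complex.sq_norm, Complex.normSq_apply]; ring
  have hsq' : ‖z - 1‖ ^ 2 = (z.re - 1) ^ 2 + z.im ^ 2 := by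
    rw [Complex.sq_norm, Complex.normSq_apply,
      Complex.sub_re, Complex.sub_im, Complex.one_re, Complex.one_im]
    ring
  have him2 : z.im ^ 2 = (‖z‖ * Real.sin α) ^ 2 := by
    linear_combination -hsq - ‖z‖ ^ 2 * hpy - (z.re + ‖z‖ * Real.cos α) * hre_z
  have him2' : z.im ^ 2 = (‖z - 1‖ * Real.sin β) ^ 2 := by
    linear_combination -hsq' - ‖z - 1‖ ^ 2 * hpyb -
      (‖z - 1‖ * Real.cos β + 1 - z.re) * hre_z'
  have hrsa : 0 < ‖z‖ * Real.sin α := mul_pos hr hsa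
  have hrsb : 0 < ‖z - 1‖ * Real.sin β := mul_pos hr' hsb
  have hfacα : (z.im - ‖z‖ * Real.sin α) * (z.im + ‖z‖ * Real.sin α) = 0 := by
    linear_combination him2
  have hfacβ : (z.im - ‖z - 1‖ * Real.sin β) * (z.im + ‖z - 1‖ * Real.sin β) = 0 := by
    linear_combination him2'
  have himne : z.im ≠ 0 := by
    intro h
    have h9 : (‖z‖ * Real.sin α) ^ 2 = 0 := by rw [← him2, h]; norm_num
    exact hrsa.ne' ((pow_eq_zero_iff two_ne_zero).mp h9)
  rcases himne.lt_or_gt with hneg | hpos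
  · -- z.im < 0 : z = y
    right
    have h1 : z.im = -(‖z‖ * Real.sin α) := by
      rcases mul_eq_zero.mp hfacα with h | h
      · linarith
      · linarith
    have h2 : z.im = -(‖z - 1‖ * Real.sin β) := by
      rcases mul_eq_zero.mp hfacβ with h | h
      · linarith
      · linarith
    have hrr' : ‖z‖ * Real.sin α = ‖z - 1‖ * Real.sin β := by linarith
    have hrs : ‖z‖ * s = Real.sin β := by
      linear_combination ‖z‖ * hsadd + Real.cos β * hrr' - Real.sin β * (hre_z + hre_z')
    have hrt : ‖z‖ = t := by
      rw [ht_def, eq_div_iff hs.ne']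
      linarith
    apply Complex.ext
    · show z.re = t * Real.cos α
      rw [hre_z, hrt]
    · show z.im = -(t * Real.sin α)
      rw [h1, hrt]
  · -- z.im > 0 : z = x
    left
    have h1 : z.im = ‖z‖ * Real.sin α := by
      rcases mul_eq_zero.mp hfacα with h | h
      · linarith
      · linarith
    have h2 : z.im = ‖z - 1‖ * Real.sin β := by
      rcases mul_eq_zero.mp hfacβ with h | h
      · linarith
      · linarith
    have hrr' : ‖z‖ * Real.sin α = ‖z - 1‖ * Real.sin β := by linarith
    have hrs : ‖z‖ * s = Real.sin β := by
      linear_combination ‖z‖ * hsadd + Real.cos β * hrr' - Real.sin β * (hre_z + hre_z')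
    have hrt : ‖z‖ = t := by
      rw [ht_def, eq_div_iff hs.ne']
      linarith
    apply Complex.ext
    · show z.re = t * Real.cos α
      rw [hre_z, hrt]
    · show z.im = t * Real.sin α
      rw [h1, hrt]

end TwoTriangleAux

end

set_option maxHeartbeats 1000000 in
/-- Given distinct p₁, p₂ in the plane and α, β ∈ (0, π) with α + β < π,
there exist exactly two points p₃ with inner angle α at p₁ and β at p₂. -/
theorem two_triangle_completions (p₁ p₂ : EuclideanSpace ℝ (Fin 2)) (hp : p₁ ≠ p₂)
    (α β : ℝ) (hα : α ∈ Set.Ioo 0 π) (hβ : β ∈ Set.Ioo 0 π) (hαβ : α + β < π) :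
    ∃ x y : EuclideanSpace ℝ (Fin 2), x ≠ y ∧
      ∠ p₂ p₁ x = α ∧ ∠ p₁ p₂ x = β ∧
      ∠ p₂ p₁ y = α ∧ ∠ p₁ p₂ y = β ∧
      ∀ z : EuclideanSpace ℝ (Fin 2), ∠ p₂ p₁ z = α → ∠ p₁ p₂ z = β →
        z = x ∨ z = y := by
  classical
  set e : ℂ ≃ₗᵢ[ℝ] EuclideanSpace ℝ (Fin 2) := Complex.orthonormalBasisOneI.repr with he_def
  set q₁ : ℂ := e.symm p₁ with hq₁
  set q₂ : ℂ := e.symm p₂ with hq₂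
  have hc : q₂ - q₁ ≠ 0 := sub_ne_zero.mpr (fun h => hp (by
    have := congrArg e h
    simpa [hq₁, hq₂] using this.symm))
  set c : ℂ := q₂ - q₁ with hc_def
  set F : ℂ → EuclideanSpace ℝ (Fin 2) := fun w => e (q₁ + c * w) with hF_def
  have hF0 : F 0 = p₁ := by simp [hF_def, hq₁]
  have hF1 : F 1 = p₂ := by simp [hF_def, hc_def, hq₂]
  have hFang : ∀ a b v : ℂ, ∠ (F a) (F b) (F v) = ∠ a b v := by
    intro a b v
    have hsub : ∀ u w : ℂ, F u -ᵥ F w = e (c * (u - w)) := by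
      intro u w
      simp only [hF_def, vsub_eq_sub, ← map_sub]
      congr 1
      ring
    have hmap : InnerProductGeometry.angle (e (c * (a - b))) (e (c * (v - b))) =
        InnerProductGeometry.angle (c * (a - b)) (c * (v - b)) := by
      have := e.toLinearIsometry.angle_map (c * (a - b)) (c * (v - b))
      simpa using this
    rw [EuclideanGeometry.angle, hsub, hsub, hmap, TwoTriangleAux.angle_mul_mul hc]
    rfl
  have hFinj : Function.Injective F := by
    intro u w h
    have := e.injective h
    have := add_left_cancel this
    exact mul_left_cancel₀ hc this
  have hFsurj : ∀ z : EuclideanSpace ℝ (Fin 2), ∃ u : ℂ, F u = z := by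
    intro z
    refine ⟨(e.symm z - q₁) / c, ?_⟩
    simp only [hF_def]
    rw [mul_div_cancel₀ _ hc]
    simp
  obtain ⟨x, y, hxy, hx1, hx2, hy1, hy2, huniq⟩ := TwoTriangleAux.key0 α β hα hβ hαβ
  refine ⟨F x, F y, fun h => hxy (hFinj h), ?_, ?_, ?_, ?_, ?_⟩
  · rw [← hF1, ← hF0, hFang]; exact hx1
  · rw [← hF1, ← hF0, hFang]; exact hx2
  · rw [← hF1, ← hF0, hFang]; exact hy1
  · rw [← hF1, ← hF0, hFang]; exact hy2
  · intro z hz1 hz2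
    obtain ⟨u, hu⟩ := hFsurj z
    rw [← hu, ← hF1, ← hF0, hFang] at hz1 hz2
    rcases huniq u hz1 hz2 with h | h
    · left; rw [← hu, h]
    · right; rw [← hu, h]
end
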